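/- arXiv:2106.03529 — 3 statements merged into one kernel-verified Lean document; each statement's English description precedes it below -/
import Mathlib

section
/- Let d ≥ 2 and let a_{ij} ∈ ℝ for i,j ∈ {1,...,d}. Set A_i = Σ_j a_{ij} and A^j = Σ_i a_{ij}. Suppose (1) Σ_i A_i = 0 and (2) there is a constant c with 0 < c < 1/d such that a_{ij}/A_i > c for all i,j (in particular each A_i ≠ 0 and all a_{ij} in row i share the sign of A_i). Then Σ_j |A^j| ≤ (1 - 2c) Σ_i |A_i|. -/
/-- Combinatorial lemma: if the row sums `A_i` of a `d × d` real matrix sum to zero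
and each entry satisfies `a i j / A_i > c` for some `0 < c < 1/d`, then the total
absolute column sums contract by the factor `1 - 2c` compared to the total absolute
row sums. -/
theorem stmt_0 (d : ℕ) (hd : 2 ≤ d) (a : Fin d → Fin d → ℝ) (c : ℝ)
    (hc0 : 0 < c) (hc1 : c < 1 / (d : ℝ))
    (hzero : ∑ i, ∑ j, a i j = 0)
    (hbal : ∀ i j, c < a i j / (∑ k, a i k)) :
    ∑ j, |∑ i, a i j| ≤ (1 - 2 * c) * ∑ i, |∑ j, a i j| := by
  set A : Fin d → ℝ := fun i => ∑ j, a i j with hA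
  have hAne : ∀ i, A i ≠ 0 := by
    intro i h
    have h2 := hbal i ⟨0, by omega⟩
    rw [show (∑ k, a i k) = A i from rfl, h, div_zero] at h2
    linarith
  set P := Finset.univ.filter (fun i => 0 < A i) with hP
  set N := Finset.univ.filter (fun i => ¬ 0 < A i) with hN
  have hNneg : ∀ i ∈ N, A i < 0 := by
    intro i hi
    rw [hN, Finset.mem_filter] at hi
    exact lt_of_le_of_ne (not_lt.mp hi.2) (hAne i)
  have hPpos : ∀ i ∈ P, 0 < A i := by
    intro i hi
    rw [hP, Finset.mem_filter] at hi
    exact hi.2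
  have hsplit : ∀ s : Fin d → ℝ, ∑ i, s i = ∑ i ∈ P, s i + ∑ i ∈ N, s i := by
    intro s
    exact (Finset.sum_filter_add_sum_filter_not Finset.univ _ s).symm
  set S := ∑ i ∈ P, A i with hS
  have hS0 : 0 ≤ S := Finset.sum_nonneg fun i hi => (hPpos i hi).le
  have hNS : ∑ i ∈ N, A i = -S := by
    have := hsplit A
    have hz : ∑ i, A i = 0 := hzero
    linarith [hz ▸ this]
  -- pointwise bounds
  have hPb : ∀ j, ∀ i ∈ P, c * A i < a i j := by
    intro j i hi
    have h2 := hbal i j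
    rwa [show (∑ k, a i k) = A i from rfl, lt_div_iff₀ (hPpos i hi)] at h2
  have hNb : ∀ j, ∀ i ∈ N, a i j < c * A i := by
    intro j i hi
    have h2 := hbal i j
    rwa [show (∑ k, a i k) = A i from rfl, lt_div_iff_of_neg (hNneg i hi)] at h2
  -- define u, v
  have key : ∀ j, |∑ i, a i j| ≤ ((∑ i ∈ P, a i j) - c * S) + (-(∑ i ∈ N, a i j) - c * S) := by
    intro j
    have hPl : c * S ≤ ∑ i ∈ P, a i j := by
      rw [hS, Finset.mul_sum]
      exact Finset.sum_le_sum fun i hi => (hPb j i hi).le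
    have hNl : ∑ i ∈ N, a i j ≤ -(c * S) := by
      calc ∑ i ∈ N, a i j ≤ ∑ i ∈ N, c * A i :=
            Finset.sum_le_sum fun i hi => (hNb j i hi).le
        _ = c * ∑ i ∈ N, A i := (Finset.mul_sum _ _ _).symm
        _ = -(c * S) := by rw [hNS]; ring
    have hsp := hsplit (fun i => a i j)
    rw [abs_le]
    constructor <;> simp only [hsp] <;> linarith
  calc ∑ j, |∑ i, a i j|
      ≤ ∑ j : Fin d, (((∑ i ∈ P, a i j) - c * S) + (-(∑ i ∈ N, a i j) - c * S)) :=
        Finset.sum_le_sum fun j _ => key j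
    _ = 2 * S - 2 * d * c * S := by
        have e1 : ∑ j : Fin d, ∑ i ∈ P, a i j = S := by rw [Finset.sum_comm]
        have e2 : ∑ j : Fin d, ∑ i ∈ N, a i j = -S := by rw [Finset.sum_comm]; exact hNS
        simp only [Finset.sum_add_distrib, Finset.sum_sub_distrib, Finset.sum_neg_distrib,
          e1, e2, Finset.sum_const, Finset.card_univ, Fintype.card_fin, nsmul_eq_mul]
        ring
    _ ≤ (1 - 2 * c) * (2 * S) := by
        have hd2 : (2 : ℝ) ≤ (d : ℝ) := by exact_mod_cast hd
        nlinarith [mul_nonneg (mul_nonneg (sub_nonneg.mpr hd2) hc0.le) hS0]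
    _ = (1 - 2 * c) * ∑ i, |∑ j, a i j| := by
        congr 1
        rw [show (∑ i, |∑ j, a i j|) = ∑ i, |A i| from rfl, hsplit (fun i => |A i|)]
        have h1 : ∑ i ∈ P, |A i| = S := Finset.sum_congr rfl fun i hi => abs_of_pos (hPpos i hi)
        have h2 : ∑ i ∈ N, |A i| = S := by
          have : ∑ i ∈ N, |A i| = ∑ i ∈ N, -A i :=
            Finset.sum_congr rfl fun i hi => abs_of_neg (hNneg i hi)
          rw [this, Finset.sum_neg_distrib, hNS, neg_neg]
        rw [h1, h2]; ring
end

section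
/- Let T : [0,1] → [0,1] be a map, J ⊂ [0,1] an interval, and n ≥ 1 such that T is C² with DT > 0 on each of the intervals J, T(J), ..., T^{n-1}(J), and such that these intervals are pairwise disjoint. Then for all x, y ∈ J, (D T^n)(x) / (D T^n)(y) ≤ exp(∫₀¹ |η_T(t)| dt), where η_T = D²T/DT is defined on the union of intervals where T is C² with DT > 0 (and extended by 0 elsewhere). -/
open Set

/-- Distortion bound: if `J ⊆ [0,1]` is an interval whose images
`J, T(J), …, T^{n-1}(J)` are pairwise disjoint, stay in `[0,1]`, and on each of which
`T` is `C²` with positive derivative, then for all `x, y ∈ J` the distortion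
`DT^n(x)/DT^n(y)` is bounded by `exp (∫₀¹ |η_T|)`, where `η_T = T''/T'` on the union
of those intervals (extended arbitrarily elsewhere, with `η` interval-integrable). -/
theorem stmt_7 (T T' T'' η : ℝ → ℝ) (J : Set ℝ) (n : ℕ) (hn : 1 ≤ n)
    (hJ : J ⊆ Icc (0:ℝ) 1) (hJconn : J.OrdConnected)
    (himg : ∀ i < n, T^[i] '' J ⊆ Icc (0:ℝ) 1)
    (hdisj : ∀ i < n, ∀ j < n, i ≠ j → Disjoint (T^[i] '' J) (T^[j] '' J))
    (hT : ∀ i < n, ∀ x ∈ T^[i] '' J, HasDerivAt T (T' x) x)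
    (hT' : ∀ i < n, ∀ x ∈ T^[i] '' J, HasDerivAt T' (T'' x) x)
    (hpos : ∀ i < n, ∀ x ∈ T^[i] '' J, 0 < T' x)
    (hη : ∀ i < n, ∀ x ∈ T^[i] '' J, η x = T'' x / T' x)
    (hint : IntervalIntegrable η MeasureTheory.volume 0 1) :
    ∀ x ∈ J, ∀ y ∈ J,
      deriv (T^[n]) x / deriv (T^[n]) y ≤ Real.exp (∫ t in (0:ℝ)..1, |η t|) := by
  intro x hx y hy
  -- Each image is order-connected
  have hconn : ∀ i < n, (T^[i] '' J).OrdConnected := by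
    intro i
    induction i with
    | zero => intro _; simpa using hJconn
    | succ k ih =>
      intro hk
      have hk' : k < n := Nat.lt_of_succ_lt hk
      have hco : ContinuousOn T (T^[k] '' J) := fun z hz =>
        ((hT k hk' z hz).continuousAt).continuousWithinAt
      have hpre : IsPreconnected (T '' (T^[k] '' J)) :=
        ((ih hk').isPreconnected).image T hco
      have himgeq : T^[k+1] '' J = T '' (T^[k] '' J) := by
        rw [Function.iterate_succ', Set.image_comp]
      rw [himgeq]
      exact hpre.ordConnected
  -- derivative of the iterate
  have key : ∀ z ∈ J, HasDerivAt (T^[n]) (∏ i ∈ Finset.range n, T' (T^[i] z)) z := by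
    intro z hz
    have H : ∀ m, m ≤ n → HasDerivAt (T^[m]) (∏ i ∈ Finset.range m, T' (T^[i] z)) z := by
      intro m
      induction m with
      | zero => intro _; simpa using hasDerivAt_id z
      | succ k ih =>
        intro hm
        have hk := ih (Nat.le_of_succ_le hm)
        have hmem : T^[k] z ∈ T^[k] '' J := mem_image_of_mem _ hz
        have hTd := hT k (Nat.lt_of_succ_le hm) _ hmem
        have hc := hTd.comp z hk
        rw [Finset.prod_range_succ]
        have : T^[k+1] = T ∘ T^[k] := Function.iterate_succ' T k
        rw [this]
        simpa [mul_comm] using hc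
    exact H n le_rfl
  have hPx : 0 < ∏ i ∈ Finset.range n, T' (T^[i] x) :=
    Finset.prod_pos fun i hi => hpos i (Finset.mem_range.mp hi) _ (mem_image_of_mem _ hx)
  have hPy : 0 < ∏ i ∈ Finset.range n, T' (T^[i] y) :=
    Finset.prod_pos fun i hi => hpos i (Finset.mem_range.mp hi) _ (mem_image_of_mem _ hy)
  rw [(key x hx).deriv, (key y hy).deriv]
  rw [← Real.log_le_iff_le_exp (div_pos hPx hPy)]
  rw [Real.log_div hPx.ne' hPy.ne',
    Real.log_prod (fun i hi => (hpos i (Finset.mem_range.mp hi) _ (mem_image_of_mem _ hx)).ne'),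
    Real.log_prod (fun i hi => (hpos i (Finset.mem_range.mp hi) _ (mem_image_of_mem _ hy)).ne'),
    ← Finset.sum_sub_distrib]
  -- the intervals
  set S : ℕ → Set ℝ := fun i => Set.uIoc (T^[i] y) (T^[i] x) with hS
  have hSsub : ∀ i < n, S i ⊆ T^[i] '' J := by
    intro i hi
    have := (hconn i hi).uIcc_subset (mem_image_of_mem _ hy) (mem_image_of_mem _ hx)
    exact fun t ht => this (Set.Ioc_subset_Icc_self ht)
  -- interval integrability of η on each piece
  have hii : ∀ i < n, IntervalIntegrable η MeasureTheory.volume (T^[i] y) (T^[i] x) := by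
    intro i hi
    apply hint.mono_set
    rw [Set.uIcc_of_le (zero_le_one : (0:ℝ) ≤ 1)]
    exact fun t ht =>
      himg i hi (((hconn i hi).uIcc_subset (mem_image_of_mem _ hy) (mem_image_of_mem _ hx)) ht)
  -- step: each log-difference is bounded by the integral of |η| over S i
  have hstep : ∀ i ∈ Finset.range n,
      Real.log (T' (T^[i] x)) - Real.log (T' (T^[i] y)) ≤
        ∫ t in S i, |η t| ∂MeasureTheory.volume := by
    intro i hi'
    have hi : i < n := Finset.mem_range.mp hi'
    have hftc : (∫ t in (T^[i] y)..(T^[i] x), η t) =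
        Real.log (T' (T^[i] x)) - Real.log (T' (T^[i] y)) := by
      apply intervalIntegral.integral_eq_sub_of_hasDerivAt
        (f := fun t => Real.log (T' t)) _ (hii i hi)
      intro t ht
      have htm : t ∈ T^[i] '' J :=
        (hconn i hi).uIcc_subset (mem_image_of_mem _ hy) (mem_image_of_mem _ hx) ht
      have h1 := (hT' i hi t htm).log (hpos i hi t htm).ne'
      rw [hη i hi t htm]
      exact h1
    calc Real.log (T' (T^[i] x)) - Real.log (T' (T^[i] y))
        ≤ |∫ t in (T^[i] y)..(T^[i] x), η t| := by rw [hftc] at *; exact le_abs_self _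
      _ ≤ ∫ t in S i, |η t| ∂MeasureTheory.volume := by
          simpa [Real.norm_eq_abs] using
            intervalIntegral.norm_integral_le_integral_norm_uIoc
              (f := η) (a := T^[i] y) (b := T^[i] x) (μ := MeasureTheory.volume)
  refine le_trans (Finset.sum_le_sum hstep) ?_
  -- |η| is integrable on [0,1]
  have habs : MeasureTheory.IntegrableOn (fun t => |η t|) (Icc (0:ℝ) 1) MeasureTheory.volume := by
    have h1 : MeasureTheory.IntegrableOn η (Ioc (0:ℝ) 1) MeasureTheory.volume := by
      simpa using hint.1
    have h2 : MeasureTheory.IntegrableOn η (Icc (0:ℝ) 1) MeasureTheory.volume :=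
      h1.congr_set_ae MeasureTheory.Ioc_ae_eq_Icc.symm
    exact h2.abs
  have hSmeas : ∀ i ∈ Finset.range n, MeasurableSet (S i) := fun i _ => measurableSet_uIoc
  have hSdisj : (↑(Finset.range n) : Set ℕ).Pairwise (Function.onFun Disjoint S) := by
    intro i hi j hj hij
    have hi' : i < n := Finset.mem_range.mp hi
    have hj' : j < n := Finset.mem_range.mp hj
    exact Set.disjoint_of_subset (hSsub i hi') (hSsub j hj') (hdisj i hi' j hj' hij)
  have hSint : ∀ i ∈ Finset.range n,
      MeasureTheory.IntegrableOn (fun t => |η t|) (S i) MeasureTheory.volume := by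
    intro i hi
    have hi' : i < n := Finset.mem_range.mp hi
    exact habs.mono_set fun t ht => himg i hi' (hSsub i hi' ht)
  have hsum := MeasureTheory.integral_biUnion_finset (Finset.range n)
      (f := fun t => |η t|) (μ := MeasureTheory.volume) hSmeas hSdisj hSint
  rw [← hsum]
  have hUsub : (⋃ i ∈ Finset.range n, S i) ⊆ Icc (0:ℝ) 1 := by
    intro t ht
    simp only [Set.mem_iUnion] at ht
    obtain ⟨i, hi, hti⟩ := ht
    exact himg i (Finset.mem_range.mp hi) (hSsub i (Finset.mem_range.mp hi) hti)
  have hmono : (∫ t in ⋃ i ∈ Finset.range n, S i, |η t| ∂MeasureTheory.volume)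
      ≤ ∫ t in Icc (0:ℝ) 1, |η t| ∂MeasureTheory.volume := by
    apply MeasureTheory.setIntegral_mono_set habs
    · exact Filter.Eventually.of_forall fun t => abs_nonneg _
    · exact HasSubset.Subset.eventuallyLE hUsub
  refine hmono.trans_eq ?_
  rw [MeasureTheory.integral_Icc_eq_integral_Ioc,
    intervalIntegral.integral_of_le (zero_le_one : (0:ℝ) ≤ 1)]
end

section
/- Let f₁, f₂ be orientation-preserving C² diffeomorphisms of [0,1] (fixing 0 and 1). Then there exists a point x₀ ∈ [0,1] with f₁'(x₀) = f₂'(x₀), and consequently for every x ∈ [0,1], |log f₁'(x) − log f₂'(x)| ≤ ∫₀¹ |η_{f₁}(t) − η_{f₂}(t)| dt. -/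
open Set MeasureTheory intervalIntegral

private lemma deriv_cont {f : ℝ → ℝ} (hf : ContDiffOn ℝ 2 f (Icc (0:ℝ) 1)) :
    ContinuousOn (derivWithin f (Icc (0:ℝ) 1)) (Icc (0:ℝ) 1) :=
  (hf.derivWithin (uniqueDiffOn_Icc one_pos) (by norm_num)).continuousOn (n := 1)

private lemma deriv2_cont {f : ℝ → ℝ} (hf : ContDiffOn ℝ 2 f (Icc (0:ℝ) 1)) :
    ContinuousOn (derivWithin (derivWithin f (Icc (0:ℝ) 1)) (Icc (0:ℝ) 1)) (Icc (0:ℝ) 1) :=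
  ((hf.derivWithin (uniqueDiffOn_Icc one_pos) (by norm_num) : ContDiffOn ℝ 1 _ _).derivWithin
    (uniqueDiffOn_Icc one_pos) (by norm_num)).continuousOn (n := 0)

private lemma hasDW {f : ℝ → ℝ} (hf : ContDiffOn ℝ 2 f (Icc (0:ℝ) 1)) {x : ℝ}
    (hx : x ∈ Icc (0:ℝ) 1) :
    HasDerivWithinAt f (derivWithin f (Icc (0:ℝ) 1) x) (Icc (0:ℝ) 1) x :=
  ((hf.differentiableOn (by norm_num)) x hx).hasDerivWithinAt

private lemma deriv_hasDW {f : ℝ → ℝ} (hf : ContDiffOn ℝ 2 f (Icc (0:ℝ) 1)) {x : ℝ}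
    (hx : x ∈ Icc (0:ℝ) 1) :
    HasDerivWithinAt (derivWithin f (Icc (0:ℝ) 1))
      (derivWithin (derivWithin f (Icc (0:ℝ) 1)) (Icc (0:ℝ) 1) x) (Icc (0:ℝ) 1) x :=
  (((hf.derivWithin (uniqueDiffOn_Icc one_pos) (by norm_num) : ContDiffOn ℝ 1 _ _).differentiableOn
    (by norm_num)) x hx).hasDerivWithinAt

private lemma ftc_one {f : ℝ → ℝ} (hf : ContDiffOn ℝ 2 f (Icc (0:ℝ) 1)) :
    ∫ t in (0:ℝ)..1, derivWithin f (Icc (0:ℝ) 1) t = f 1 - f 0 := by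
  apply integral_eq_sub_of_hasDeriv_right_of_le zero_le_one (hf.continuousOn)
  · intro x hx
    exact (((hasDW hf (Ioo_subset_Icc_self hx)).hasDerivAt
      (Icc_mem_nhds hx.1 hx.2)).hasDerivWithinAt)
  · exact (deriv_cont hf).intervalIntegrable_of_Icc zero_le_one

open Set

/-- The non-linearity `η_h = h''/h'` of a map `h : [0,1] → ℝ`, computed with
derivatives within `[0,1]`. -/
noncomputable def nlOn (h : ℝ → ℝ) (x : ℝ) : ℝ :=
  derivWithin (derivWithin h (Icc (0:ℝ) 1)) (Icc (0:ℝ) 1) x /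
    derivWithin h (Icc (0:ℝ) 1) x

/-- For orientation-preserving `C²` diffeomorphisms `f₁, f₂` of `[0,1]` fixing `0`
and `1`, the derivatives agree at some point `x₀ ∈ [0,1]`, and consequently
`|log f₁'(x) - log f₂'(x)| ≤ ∫₀¹ |η_{f₁} - η_{f₂}|` for every `x ∈ [0,1]`. -/
theorem stmt_13 (f₁ f₂ : ℝ → ℝ)
    (h₁ : ContDiffOn ℝ 2 f₁ (Icc (0:ℝ) 1))
    (h₂ : ContDiffOn ℝ 2 f₂ (Icc (0:ℝ) 1))
    (h₁0 : f₁ 0 = 0) (h₁1 : f₁ 1 = 1) (h₂0 : f₂ 0 = 0) (h₂1 : f₂ 1 = 1)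
    (h₁' : ∀ x ∈ Icc (0:ℝ) 1, 0 < derivWithin f₁ (Icc (0:ℝ) 1) x)
    (h₂' : ∀ x ∈ Icc (0:ℝ) 1, 0 < derivWithin f₂ (Icc (0:ℝ) 1) x) :
    (∃ x₀ ∈ Icc (0:ℝ) 1,
        derivWithin f₁ (Icc (0:ℝ) 1) x₀ = derivWithin f₂ (Icc (0:ℝ) 1) x₀) ∧
    ∀ x ∈ Icc (0:ℝ) 1,
      |Real.log (derivWithin f₁ (Icc (0:ℝ) 1) x) -
          Real.log (derivWithin f₂ (Icc (0:ℝ) 1) x)|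
        ≤ ∫ t in (0:ℝ)..1, |nlOn f₁ t - nlOn f₂ t| := by
  set g₁ := derivWithin f₁ (Icc (0:ℝ) 1) with hg₁
  set g₂ := derivWithin f₂ (Icc (0:ℝ) 1) with hg₂
  have hc₁ : ContinuousOn g₁ (Icc (0:ℝ) 1) := deriv_cont h₁
  have hc₂ : ContinuousOn g₂ (Icc (0:ℝ) 1) := deriv_cont h₂
  -- existence of x₀
  have key : ∀ u : ℝ → ℝ, ContinuousOn u (Icc (0:ℝ) 1) → (∀ x ∈ Icc (0:ℝ) 1, u x ≠ 0) →
      0 < u 0 → 0 < ∫ t in (0:ℝ)..1, u t := by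
    intro u hu hne h0
    have hpos : ∀ x ∈ Icc (0:ℝ) 1, 0 < u x := by
      intro x hx
      by_contra hle
      have hlt : u x < 0 := lt_of_le_of_ne (not_lt.1 hle) (hne x hx)
      obtain ⟨c, hc, hc0⟩ := intermediate_value_Icc' hx.1 (hu.mono (Icc_subset_Icc le_rfl hx.2))
        (⟨hlt.le, h0.le⟩ : (0:ℝ) ∈ Icc (u x) (u 0))
      exact hne c (⟨hc.1, hc.2.trans hx.2⟩) hc0
    exact intervalIntegral_pos_of_pos_on (hu.intervalIntegrable_of_Icc zero_le_one)
      (fun x hx => hpos x (Ioo_subset_Icc_self hx)) one_pos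
  have hint1 : ∫ t in (0:ℝ)..1, g₁ t = 1 := by rw [ftc_one h₁, h₁1, h₁0]; ring
  have hint2 : ∫ t in (0:ℝ)..1, g₂ t = 1 := by rw [ftc_one h₂, h₂1, h₂0]; ring
  have hintd : ∫ t in (0:ℝ)..1, (g₁ t - g₂ t) = 0 := by
    rw [intervalIntegral.integral_sub (hc₁.intervalIntegrable_of_Icc zero_le_one)
      (hc₂.intervalIntegrable_of_Icc zero_le_one), hint1, hint2]; ring
  have hex : ∃ x₀ ∈ Icc (0:ℝ) 1, g₁ x₀ = g₂ x₀ := by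
    by_contra hno
    push_neg at hno
    have hne : ∀ x ∈ Icc (0:ℝ) 1, g₁ x - g₂ x ≠ 0 := fun x hx => sub_ne_zero.2 (hno x hx)
    rcases lt_or_gt_of_ne (hne 0 (by norm_num)) with h0 | h0
    · have := key (fun t => -(g₁ t - g₂ t)) ((hc₁.sub hc₂).neg)
        (fun x hx => neg_ne_zero.2 (hne x hx)) (by simpa using neg_pos.2 h0)
      rw [intervalIntegral.integral_neg, hintd] at this
      simp at this
    · have := key (fun t => g₁ t - g₂ t) (hc₁.sub hc₂) hne h0
      rw [hintd] at this
      exact lt_irrefl 0 this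
  refine ⟨hex, ?_⟩
  obtain ⟨x₀, hx₀, heq⟩ := hex
  -- the log-difference function
  set L : ℝ → ℝ := fun t => Real.log (g₁ t) - Real.log (g₂ t) with hL
  have hL₀ : L x₀ = 0 := by simp [hL, heq]
  set η : ℝ → ℝ := fun t => nlOn f₁ t - nlOn f₂ t with hη
  have hder : ∀ t ∈ Icc (0:ℝ) 1, HasDerivWithinAt L (η t) (Icc (0:ℝ) 1) t := by
    intro t ht
    exact ((deriv_hasDW h₁ ht).log (h₁' t ht).ne').sub ((deriv_hasDW h₂ ht).log (h₂' t ht).ne')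
  have hcontL : ContinuousOn L (Icc (0:ℝ) 1) :=
    (hc₁.log fun x hx => (h₁' x hx).ne').sub (hc₂.log fun x hx => (h₂' x hx).ne')
  have hcontη : ContinuousOn η (Icc (0:ℝ) 1) := by
    apply ContinuousOn.sub
    · exact (deriv2_cont h₁).div hc₁ fun x hx => (h₁' x hx).ne'
    · exact (deriv2_cont h₂).div hc₂ fun x hx => (h₂' x hx).ne'
  have hIntAbs : IntervalIntegrable (fun t => |η t|) volume 0 1 :=
    hcontη.abs.intervalIntegrable_of_Icc zero_le_one
  have haesub : ∀ a b : ℝ, a ∈ Icc (0:ℝ) 1 → b ∈ Icc (0:ℝ) 1 → a ≤ b →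
      ∫ t in a..b, η t = L b - L a := by
    intro a b ha hb hab
    apply integral_eq_sub_of_hasDeriv_right_of_le hab
      (hcontL.mono (Icc_subset_Icc ha.1 hb.2))
    · intro t ht
      have ht' : t ∈ Ioo (0:ℝ) 1 := ⟨lt_of_le_of_lt ha.1 ht.1, lt_of_lt_of_le ht.2 hb.2⟩
      exact ((hder t (Ioo_subset_Icc_self ht')).hasDerivAt
        (Icc_mem_nhds ht'.1 ht'.2)).hasDerivWithinAt
    · exact (hcontη.mono (Icc_subset_Icc ha.1 hb.2)).intervalIntegrable_of_Icc hab
  have hmono : ∀ a b : ℝ, a ∈ Icc (0:ℝ) 1 → b ∈ Icc (0:ℝ) 1 → a ≤ b →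
      ∫ t in a..b, |η t| ≤ ∫ t in (0:ℝ)..1, |η t| := by
    intro a b ha hb hab
    exact intervalIntegral.integral_mono_interval ha.1 hab hb.2
      (Filter.Eventually.of_forall fun t => abs_nonneg _) hIntAbs
  intro x hx
  have hxL : |Real.log (g₁ x) - Real.log (g₂ x)| = |L x - L x₀| := by rw [hL₀]; simp [hL]
  rw [hxL]
  rcases le_total x₀ x with hc | hc
  · calc |L x - L x₀| = |∫ t in x₀..x, η t| := by rw [haesub x₀ x hx₀ hx hc]
      _ ≤ ∫ t in x₀..x, |η t| := intervalIntegral.abs_integral_le_integral_abs hc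
      _ ≤ _ := hmono x₀ x hx₀ hx hc
  · calc |L x - L x₀| = |∫ t in x..x₀, η t| := by rw [haesub x x₀ hx hx₀ hc, abs_sub_comm]
      _ ≤ ∫ t in x..x₀, |η t| := intervalIntegral.abs_integral_le_integral_abs hc
      _ ≤ _ := hmono x x₀ hx hx₀ hc
end
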